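/- Let R : S → A → S → ℝ be a reward function, γ ∈ ℝ a discount factor, and φ : S → ℝ a potential, and let R̂ be the potential-based shaping of R by φ. Let τ be an expert trajectory of length L with end state s_L, and let (τ_j)_{j=1}^M be a finite family of trajectories of length L with the same starting state as τ, where τ_j has end state s^j_L. Then ρ_τ(R̂) = exp(R(τ)) / (exp(R(τ)) + ∑_{j=1}^M exp(R(τ_j) + γ^L · (φ(s^j_L) − φ(s_L)))). -/

import Mathlib

/-- The discounted reward of a trajectory `(s, a)` of length `L`:
`R(τ) = ∑_{t=0}^{L-1} γ^t · R(s_t, a_t, s_{t+1})`. -/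
noncomputable def discReward {S A : Type*} (R : S → A → S → ℝ) (γ : ℝ) (L : ℕ)
    (s : Fin (L + 1) → S) (a : Fin L → A) : ℝ :=
  ∑ t : Fin L, γ ^ (t : ℕ) * R (s t.castSucc) (a t) (s t.succ)

/-- The ρ-projection of a reward function `R`, given an expert trajectory `(s, a)` of
length `L` and a family of `M` trajectories `(s' j, a' j)` of length `L`:
`ρ_τ(R) = exp(R(τ)) / (exp(R(τ)) + ∑_{j=1}^M exp(R(τ_j)))`. -/
noncomputable def rhoProj {S A : Type*} (γ : ℝ) (L M : ℕ)
    (s : Fin (L + 1) → S) (a : Fin L → A)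
    (s' : Fin M → Fin (L + 1) → S) (a' : Fin M → Fin L → A)
    (R : S → A → S → ℝ) : ℝ :=
  Real.exp (discReward R γ L s a) /
    (Real.exp (discReward R γ L s a) +
      ∑ j : Fin M, Real.exp (discReward R γ L (s' j) (a' j)))


open Fin.NatCast in
lemma discReward_shaped {S A : Type*} (R : S → A → S → ℝ) (γ : ℝ) (φ : S → ℝ) (L : ℕ)
    (s : Fin (L + 1) → S) (a : Fin L → A) :
    discReward (fun x y z => R x y z + γ * φ z - φ x) γ L s a =
      discReward R γ L s a + (γ ^ L * φ (s (Fin.last L)) - φ (s 0)) := by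
  unfold discReward
  have key : ∑ t : Fin L, γ ^ (t : ℕ) * (γ * φ (s t.succ) - φ (s t.castSucc)) =
      γ ^ L * φ (s (Fin.last L)) - φ (s 0) := by
    have : ∀ t : Fin L, γ ^ (t : ℕ) * (γ * φ (s t.succ) - φ (s t.castSucc)) =
        (fun i : ℕ => γ ^ i * φ (s i)) ((t : ℕ) + 1) - (fun i : ℕ => γ ^ i * φ (s i)) (t : ℕ) := by
      intro t
      simp only []
      have h1 : ((((t : ℕ) + 1 : ℕ)) : Fin (L + 1)) = t.succ := by
        simp [Fin.ext_iff, Nat.mod_eq_of_lt (Nat.succ_lt_succ t.isLt)]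
      have h2 : (((t : ℕ) : ℕ) : Fin (L + 1)) = t.castSucc := by
        simp [Fin.ext_iff, Nat.mod_eq_of_lt (Nat.lt_succ_of_lt t.isLt)]
      rw [h1, h2]; ring
    rw [Finset.sum_congr rfl (fun t _ => this t),
      Fin.sum_univ_eq_sum_range (fun i : ℕ => (fun i : ℕ => γ ^ i * φ (s i)) (i + 1) - (fun i : ℕ => γ ^ i * φ (s i)) i) L,
      Finset.sum_range_sub (fun i : ℕ => γ ^ i * φ (s i))]
    have hL : ((L : ℕ) : Fin (L+1)) = Fin.last L := by simp [Fin.ext_iff, Nat.mod_self]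
    have h0 : ((0 : ℕ) : Fin (L+1)) = 0 := by simp
    rw [hL, h0]; ring
  rw [← key, ← Finset.sum_add_distrib]
  congr 1; ext t; ring

/-- For a family of trajectories with the same starting state as the expert
trajectory, the ρ-projection of the shaped reward `R̂` equals
`exp(R(τ)) / (exp(R(τ)) + ∑_j exp(R(τ_j) + γ^L·(φ(s^j_L) − φ(s_L))))`. -/
theorem rhoProj_shaped_formula {S A : Type*} (R : S → A → S → ℝ) (γ : ℝ)
    (φ : S → ℝ) (L M : ℕ) (s : Fin (L + 1) → S) (a : Fin L → A)
    (s' : Fin M → Fin (L + 1) → S) (a' : Fin M → Fin L → A)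
    (hstart : ∀ j : Fin M, s' j 0 = s 0) :
    rhoProj γ L M s a s' a' (fun x y z => R x y z + γ * φ z - φ x) =
      Real.exp (discReward R γ L s a) /
        (Real.exp (discReward R γ L s a) +
          ∑ j : Fin M, Real.exp (discReward R γ L (s' j) (a' j) +
            γ ^ L * (φ (s' j (Fin.last L)) - φ (s (Fin.last L))))) := by
  unfold rhoProj
  simp only [discReward_shaped, hstart]
  set c : ℝ := γ ^ L * φ (s (Fin.last L)) - φ (s 0) with hc
  have hterm : ∀ j : Fin M,
      discReward R γ L (s' j) (a' j) + (γ ^ L * φ (s' j (Fin.last L)) - φ (s 0)) =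
      (discReward R γ L (s' j) (a' j) + γ ^ L * (φ (s' j (Fin.last L)) - φ (s (Fin.last L)))) + c := by
    intro j; rw [hc]; ring
  simp only [hterm, Real.exp_add]
  rw [← Finset.sum_mul, ← add_mul, mul_div_mul_right _ _ (Real.exp_ne_zero c)]
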